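/- Suppose there exist α, β, C > 0 with δ = α + β such that |û₀(k)|² ≤ C γ_k^{2δ} for all k and ∑_{k∈ℤ}(1+k²)^{2α+1} γ_k^{2β} < ∞. Then the solution of the linear damped BBM equation satisfies ‖u(t)‖_{H¹}² ≤ C e^{−2α}(α/t)^{2α} ∑_{k∈ℤ}(1+k²)^{2α+1} γ_k^{2β}, i.e. ‖u(t)‖_{H¹}² = O(t^{−2α}). -/

import Mathlib

lemma exp_decay_bound (a s : ℝ) (ha : 0 < a) (hs : 0 < s) :
    Real.exp (-s) ≤ Real.exp (-a) * (a / s) ^ a := by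
  have hd : (0:ℝ) < a / s := by positivity
  rw [Real.rpow_def_of_pos hd, ← Real.exp_add]
  apply Real.exp_le_exp.mpr
  have hlog : Real.log (s / a) ≤ s / a - 1 := Real.log_le_sub_one_of_pos (by positivity)
  have h2 : Real.log (a / s) = - Real.log (s / a) := by
    rw [← Real.log_inv]; congr 1; field_simp
  rw [h2]
  have hcancel : a * (s / a) = s := by field_simp
  nlinarith [mul_le_mul_of_nonneg_left hlog ha.le]

/-- If `|û₀ k|² ≤ C γ k ^{2δ}` with `δ = α + β` and
`∑ (1+k²)^{2α+1} γ k ^{2β} < ∞`, then the mode-wise solution of linear damped BBM satisfies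
`‖u(t)‖_{H¹}² ≤ C e^{-2α} (α/t)^{2α} ∑ (1+k²)^{2α+1} γ k^{2β} = O(t^{-2α})`. -/
theorem stmt9 (γ : ℤ → ℝ) (hγ : ∀ k, 0 < γ k) (α β C : ℝ)
    (hα : 0 < α) (hβ : 0 < β) (hC : 0 < C)
    (u : ℝ → ℤ → ℂ) (u₀ : ℤ → ℂ)
    (hsol : ∀ t k, u t k =
      Complex.exp (-(((γ k : ℂ) + Complex.I * (k : ℂ)) / (1 + (k : ℂ) ^ 2)) * t) * u₀ k)
    (hinit : ∀ k, ‖u₀ k‖ ^ 2 ≤ C * γ k ^ (2 * (α + β)))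
    (hsum : Summable fun k : ℤ => (1 + (k : ℝ) ^ 2) ^ (2 * α + 1) * γ k ^ (2 * β)) :
    ∀ t > 0, (∑' k : ℤ, (1 + (k : ℝ) ^ 2) * ‖u t k‖ ^ 2) ≤
      C * Real.exp (-2 * α) * (α / t) ^ (2 * α) *
        ∑' k : ℤ, (1 + (k : ℝ) ^ 2) ^ (2 * α + 1) * γ k ^ (2 * β) := by
  intro t ht
  set K : ℝ := C * Real.exp (-2 * α) * (α / t) ^ (2 * α) with hK
  have hKpos : 0 < K := by
    have := Real.rpow_pos_of_pos (show (0:ℝ) < α / t by positivity) (2 * α)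
    have := Real.exp_pos (-2 * α)
    positivity
  have key : ∀ k : ℤ, (1 + (k : ℝ) ^ 2) * ‖u t k‖ ^ 2 ≤
      K * ((1 + (k : ℝ) ^ 2) ^ (2 * α + 1) * γ k ^ (2 * β)) := by
    intro k
    set r : ℝ := 1 + (k : ℝ) ^ 2 with hrdef
    have hr : (0:ℝ) < r := by positivity
    have hre : (-(((γ k : ℂ) + Complex.I * (k : ℂ)) / (1 + (k : ℂ) ^ 2)) * t).re
        = -(γ k * t / r) := by
      have h : -(((γ k : ℂ) + Complex.I * (k : ℂ)) / (1 + (k : ℂ) ^ 2)) * t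
          = ((-(γ k * t / r) : ℝ) : ℂ) + ((-((k:ℝ) * t / r) : ℝ) : ℂ) * Complex.I := by
        have h2 : (1 + (k : ℂ) ^ 2) = ((r : ℝ) : ℂ) := by rw [hrdef]; push_cast; ring
        rw [h2]
        have hr' : ((r : ℝ) : ℂ) ≠ 0 := by exact_mod_cast Complex.ofReal_ne_zero.mpr hr.ne'
        push_cast
        field_simp
        ring
      rw [h]
      simp only [Complex.add_re, Complex.mul_re, Complex.I_re, Complex.I_im,
        Complex.ofReal_re, Complex.ofReal_im]
      ring
    have hnorm : ‖u t k‖ ^ 2 = Real.exp (-(2 * (γ k * t / r))) * ‖u₀ k‖ ^ 2 := by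
      rw [hsol t k, norm_mul, Complex.norm_exp, hre, mul_pow, sq,
        ← Real.exp_add]
      ring_nf
    set s : ℝ := 2 * (γ k * t / r) with hs
    have hspos : 0 < s := by have := hγ k; positivity
    have hexp : Real.exp (-s) ≤ Real.exp (-(2 * α)) * (α / t * (r / γ k)) ^ (2 * α) := by
      have h1 := exp_decay_bound (2 * α) s (by positivity) hspos
      have h2 : (2 * α) / s = α / t * (r / γ k) := by
        rw [hs]; field_simp
      rwa [h2] at h1
    have step1 : r * ‖u t k‖ ^ 2 ≤ r * Real.exp (-s) * (C * γ k ^ (2 * (α + β))) := by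
      rw [hnorm, ← mul_assoc]
      exact mul_le_mul_of_nonneg_left (hinit k) (by positivity)
    have step2 : r * Real.exp (-s) * (C * γ k ^ (2 * (α + β))) ≤
        r * (Real.exp (-(2 * α)) * (α / t * (r / γ k)) ^ (2 * α)) * (C * γ k ^ (2 * (α + β))) := by
      have hg := (hγ k)
      have : 0 ≤ C * γ k ^ (2 * (α + β)) := by positivity
      apply mul_le_mul_of_nonneg_right _ this
      exact mul_le_mul_of_nonneg_left hexp hr.le
    have step3 : r * (Real.exp (-(2 * α)) * (α / t * (r / γ k)) ^ (2 * α)) *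
        (C * γ k ^ (2 * (α + β))) = K * (r ^ (2 * α + 1) * γ k ^ (2 * β)) := by
      have hg := hγ k
      rw [hK, Real.mul_rpow (by positivity) (by positivity),
        Real.div_rpow hr.le hg.le,
        show 2 * (α + β) = 2 * α + 2 * β by ring,
        Real.rpow_add hg, Real.rpow_add hr, Real.rpow_one]
      have hgne : γ k ^ (2 * α) ≠ 0 := (Real.rpow_pos_of_pos hg _).ne'
      field_simp
    calc r * ‖u t k‖ ^ 2 ≤ r * Real.exp (-s) * (C * γ k ^ (2 * (α + β))) := step1
      _ ≤ _ := step2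
      _ = K * (r ^ (2 * α + 1) * γ k ^ (2 * β)) := step3
  have hg : Summable fun k : ℤ => K * ((1 + (k : ℝ) ^ 2) ^ (2 * α + 1) * γ k ^ (2 * β)) :=
    hsum.mul_left K
  have hf : Summable fun k : ℤ => (1 + (k : ℝ) ^ 2) * ‖u t k‖ ^ 2 :=
    Summable.of_nonneg_of_le (fun k => by positivity) key hg
  calc (∑' k : ℤ, (1 + (k : ℝ) ^ 2) * ‖u t k‖ ^ 2)
      ≤ ∑' k : ℤ, K * ((1 + (k : ℝ) ^ 2) ^ (2 * α + 1) * γ k ^ (2 * β)) :=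
        Summable.tsum_le_tsum key hf hg
    _ = K * ∑' k : ℤ, (1 + (k : ℝ) ^ 2) ^ (2 * α + 1) * γ k ^ (2 * β) := tsum_mul_left
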